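/- arXiv:1804.04359 — 2 statements merged into one kernel-verified Lean document; each statement's English description precedes it below -/
import Mathlib

section
/- The augmented target distribution π̃^N(dv_{x,1:T}^{1:N}, dv_{A,1:T-1}, j_{1:T}, dθ) of Proposition 1 can be equivalently written as [p(dθ) ψ(dv_{x,1:T}^{1:N}, dv_{A,1:T-1}) / p(y_{1:T})] × ∏_{t=1}^T (N^{-1} Σ_{i=1}^N w_t^i) × w̄_T^{j_T} ∏_{t=2}^T [w_{t-1}^{j_{t-1}} f_t^θ(x_t^{j_t} | x_{t-1}^{j_{t-1}}) / Σ_{l=1}^N w_{t-1}^l f_t^θ(x_t^{j_t} | x_{t-1}^l)]. -/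
open Finset

/-- Proposition 2: the augmented target distribution can be equivalently written
as `[p(θ)ψ/p(y_{1:T})] × ∏_t (N⁻¹ ∑ᵢ wᵢᵗ) × w̄_T^{j_T} ∏_{t≥2} backward-weights`,
where now the backward weights use the reference indices `j_{t-1}` rather than
the ancestor indices `a_{t-1}^{j_t}`.  (Finite state space formalization, `T+1`
time points, fixed `θ`; the factor `p(θ)/p(y_{1:T})` becomes `1/Z̄`.) -/
theorem stmt_7 {X : Type*} [Fintype X] [DecidableEq X] (N T : ℕ) (hN : 0 < N)
    (m1 f1 : X → ℝ) (g : Fin (T + 1) → X → ℝ)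
    (mS f : Fin T → X → X → ℝ)
    (hm1 : ∀ x, 0 < m1 x) (hf1 : ∀ x, 0 < f1 x) (hg : ∀ t x, 0 < g t x)
    (hmS : ∀ t x x', 0 < mS t x x') (hf : ∀ t x x', 0 < f t x x')
    -- importance weights of the particle system
    (W : (Fin (T + 1) → Fin N → X) → (Fin T → Fin N → Fin N) →
          Fin (T + 1) → Fin N → ℝ)
    (hW0 : ∀ P A i, W P A 0 i = f1 (P 0 i) * g 0 (P 0 i) / m1 (P 0 i))
    (hWt : ∀ P A (t : Fin T) i, W P A t.succ i =
        f t (P t.castSucc (A t i)) (P t.succ i) * g t.succ (P t.succ i)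
          / mS t (P t.castSucc (A t i)) (P t.succ i))
    -- normalized weights
    (Wbar : (Fin (T + 1) → Fin N → X) → (Fin T → Fin N → Fin N) →
          Fin (T + 1) → Fin N → ℝ)
    (hWbar : ∀ P A t i, Wbar P A t i = W P A t i / ∑ l, W P A t l)
    -- joint density of all basic random variables (particles and multinomial ancestors)
    (ψ : (Fin (T + 1) → Fin N → X) → (Fin T → Fin N → Fin N) → ℝ)
    (hψ : ∀ P A, ψ P A = (∏ i, m1 (P 0 i)) *
        ∏ t : Fin T, ∏ i, Wbar P A t.castSucc (A t i) *
          mS t (P t.castSucc (A t i)) (P t.succ i))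
    -- marginal likelihood and posterior density of a state trajectory
    (Zbar : ℝ)
    (hZbar : Zbar = ∑ ξ : Fin (T + 1) → X,
        f1 (ξ 0) * g 0 (ξ 0) *
          ∏ t : Fin T, f t (ξ t.castSucc) (ξ t.succ) * g t.succ (ξ t.succ))
    (post : (Fin (T + 1) → X) → ℝ)
    (hpost : ∀ ξ, post ξ = (f1 (ξ 0) * g 0 (ξ 0) *
        ∏ t : Fin T, f t (ξ t.castSucc) (ξ t.succ) * g t.succ (ξ t.succ)) / Zbar)
    -- the augmented target density π̃ᴺ
    (πN : (Fin (T + 1) → Fin N → X) → (Fin T → Fin N → Fin N) →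
          (Fin (T + 1) → Fin N) → ℝ)
    (hπN : ∀ P A j, πN P A j =
      post (fun t => P t (j t)) / (N : ℝ) ^ (T + 1) *
        (ψ P A / (m1 (P 0 (j 0)) *
          ∏ t : Fin T, Wbar P A t.castSucc (A t (j t.succ)) *
            mS t (P t.castSucc (A t (j t.succ))) (P t.succ (j t.succ)))) *
        ∏ t : Fin T,
          W P A t.castSucc (A t (j t.succ)) *
              f t (P t.castSucc (A t (j t.succ))) (P t.succ (j t.succ)) /
            ∑ l, W P A t.castSucc l * f t (P t.castSucc l) (P t.succ (j t.succ))) :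
    ∀ (P : Fin (T + 1) → Fin N → X) (A : Fin T → Fin N → Fin N)
      (j : Fin (T + 1) → Fin N),
      πN P A j =
        ψ P A / Zbar *
          (∏ t : Fin (T + 1), ((N : ℝ)⁻¹ * ∑ i, W P A t i)) *
          (Wbar P A (Fin.last T) (j (Fin.last T)) *
            ∏ t : Fin T,
              W P A t.castSucc (j t.castSucc) *
                  f t (P t.castSucc (j t.castSucc)) (P t.succ (j t.succ)) /
                ∑ l, W P A t.castSucc l * f t (P t.castSucc l) (P t.succ (j t.succ))) := by
  intro P A j
  have hX : Nonempty X := ⟨P 0 ⟨0, hN⟩⟩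
  have hNe : Nonempty (Fin N) := ⟨⟨0, hN⟩⟩
  -- positivity of weights
  have hw : ∀ t i, 0 < W P A t i := by
    intro t
    refine Fin.cases ?_ ?_ t
    · intro i; rw [hW0]
      exact div_pos (mul_pos (hf1 _) (hg _ _)) (hm1 _)
    · intro s i; rw [hWt]
      exact div_pos (mul_pos (hf _ _ _) (hg _ _)) (hmS _ _ _)
  have hSig : ∀ t, 0 < ∑ i, W P A t i := fun t =>
    Finset.sum_pos (fun i _ => hw t i) Finset.univ_nonempty
  have hS : ∀ t : Fin T,
      0 < ∑ l, W P A t.castSucc l * f t (P t.castSucc l) (P t.succ (j t.succ)) := fun t =>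
    Finset.sum_pos (fun l _ => mul_pos (hw _ _) (hf _ _ _)) Finset.univ_nonempty
  have hZ : 0 < Zbar := by
    rw [hZbar]
    exact Finset.sum_pos (fun ξ _ => mul_pos (mul_pos (hf1 _) (hg _ _))
      (Finset.prod_pos (fun t _ => mul_pos (hf _ _ _) (hg _ _)))) Finset.univ_nonempty
  have ha : 0 < ∏ t : Fin T,
      f t (P t.castSucc (j t.castSucc)) (P t.succ (j t.succ)) * g t.succ (P t.succ (j t.succ)) :=
    Finset.prod_pos fun t _ => mul_pos (hf _ _ _) (hg _ _)
  have hc : 0 < ∏ t : Fin T, Wbar P A t.castSucc (A t (j t.succ)) *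
      mS t (P t.castSucc (A t (j t.succ))) (P t.succ (j t.succ)) :=
    Finset.prod_pos fun t _ => mul_pos (by rw [hWbar]; exact div_pos (hw _ _) (hSig _)) (hmS _ _ _)
  -- per-term key identity
  have hkey : ∀ t : Fin T,
      (f t (P t.castSucc (j t.castSucc)) (P t.succ (j t.succ)) * g t.succ (P t.succ (j t.succ))) *
      (W P A t.castSucc (A t (j t.succ)) *
          f t (P t.castSucc (A t (j t.succ))) (P t.succ (j t.succ)) /
        ∑ l, W P A t.castSucc l * f t (P t.castSucc l) (P t.succ (j t.succ)))
      =
      (Wbar P A t.castSucc (A t (j t.succ)) *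
          mS t (P t.castSucc (A t (j t.succ))) (P t.succ (j t.succ))) *
      ((∑ i, W P A t.castSucc i) * W P A t.succ (j t.succ) *
        (f t (P t.castSucc (j t.castSucc)) (P t.succ (j t.succ)) /
          ∑ l, W P A t.castSucc l * f t (P t.castSucc l) (P t.succ (j t.succ)))) := by
    intro t
    rw [hWbar, hWt P A t (j t.succ)]
    field_simp [(hSig t.castSucc).ne', (hS t).ne',
      (hmS t (P t.castSucc (A t (j t.succ))) (P t.succ (j t.succ))).ne']
  have h1 : (∏ t : Fin T,
        f t (P t.castSucc (j t.castSucc)) (P t.succ (j t.succ)) * g t.succ (P t.succ (j t.succ))) *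
      (∏ t : Fin T, W P A t.castSucc (A t (j t.succ)) *
          f t (P t.castSucc (A t (j t.succ))) (P t.succ (j t.succ)) /
        ∑ l, W P A t.castSucc l * f t (P t.castSucc l) (P t.succ (j t.succ)))
      =
      (∏ t : Fin T, Wbar P A t.castSucc (A t (j t.succ)) *
          mS t (P t.castSucc (A t (j t.succ))) (P t.succ (j t.succ))) *
      ((∏ t : Fin T, ∑ i, W P A t.castSucc i) * (∏ t : Fin T, W P A t.succ (j t.succ)) *
        ∏ t : Fin T, f t (P t.castSucc (j t.castSucc)) (P t.succ (j t.succ)) /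
          ∑ l, W P A t.castSucc l * f t (P t.castSucc l) (P t.succ (j t.succ))) := by
    rw [← Finset.prod_mul_distrib, ← Finset.prod_mul_distrib, ← Finset.prod_mul_distrib,
      ← Finset.prod_mul_distrib]
    exact Finset.prod_congr rfl fun t _ => hkey t
  -- rewrite lhs π, post, and the last-time normalized weight
  rw [hπN P A j, hpost, hWbar P A (Fin.last T) (j (Fin.last T))]
  have hfg : f1 (P 0 (j 0)) * g 0 (P 0 (j 0)) = W P A 0 (j 0) * m1 (P 0 (j 0)) := by
    rw [hW0, div_mul_cancel₀ _ (hm1 _).ne']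
  have h2 : W P A 0 (j 0) * ∏ t : Fin T, W P A t.succ (j t.succ) =
      (∏ t : Fin T, W P A t.castSucc (j t.castSucc)) * W P A (Fin.last T) (j (Fin.last T)) := by
    rw [← Fin.prod_univ_succ (fun t => W P A t (j t)),
      ← Fin.prod_univ_castSucc (fun t => W P A t (j t))]
  have he : (∏ t : Fin T, W P A t.succ (j t.succ)) =
      (∏ t : Fin T, W P A t.castSucc (j t.castSucc)) * W P A (Fin.last T) (j (Fin.last T)) /
        W P A 0 (j 0) :=
    eq_div_of_mul_eq (hw 0 (j 0)).ne' (by rw [mul_comm]; exact h2)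
  rw [he] at h1
  have hb : (∏ t : Fin T,
        W P A t.castSucc (A t (j t.succ)) *
            f t (P t.castSucc (A t (j t.succ))) (P t.succ (j t.succ)) /
          ∑ l, W P A t.castSucc l * f t (P t.castSucc l) (P t.succ (j t.succ)))
      =
      ((∏ t : Fin T, Wbar P A t.castSucc (A t (j t.succ)) *
          mS t (P t.castSucc (A t (j t.succ))) (P t.succ (j t.succ))) *
        (((∏ t : Fin T, ∑ i, W P A t.castSucc i) *
          ((∏ t : Fin T, W P A t.castSucc (j t.castSucc)) *
              W P A (Fin.last T) (j (Fin.last T)) / W P A 0 (j 0))) *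
          ∏ t : Fin T, f t (P t.castSucc (j t.castSucc)) (P t.succ (j t.succ)) /
            ∑ l, W P A t.castSucc l * f t (P t.castSucc l) (P t.succ (j t.succ)))) /
      ∏ t : Fin T,
        f t (P t.castSucc (j t.castSucc)) (P t.succ (j t.succ)) *
          g t.succ (P t.succ (j t.succ)) :=
    eq_div_of_mul_eq ha.ne' (by rw [mul_comm]; exact h1)
  have h4 : (∏ t : Fin (T + 1), ((N : ℝ)⁻¹ * ∑ i, W P A t i)) =
      ((N : ℝ) ^ (T + 1))⁻¹ *
        ((∏ t : Fin T, ∑ i, W P A t.castSucc i) * ∑ i, W P A (Fin.last T) i) := by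
    rw [Finset.prod_mul_distrib, Finset.prod_const, Finset.card_univ, Fintype.card_fin,
      ← inv_pow, Fin.prod_univ_castSucc (fun t : Fin (T + 1) => ∑ i, W P A t i)]
  have h5 : (∏ t : Fin T,
        W P A t.castSucc (j t.castSucc) *
            f t (P t.castSucc (j t.castSucc)) (P t.succ (j t.succ)) /
          ∑ l, W P A t.castSucc l * f t (P t.castSucc l) (P t.succ (j t.succ)))
      = (∏ t : Fin T, W P A t.castSucc (j t.castSucc)) *
        ∏ t : Fin T, f t (P t.castSucc (j t.castSucc)) (P t.succ (j t.succ)) /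
          ∑ l, W P A t.castSucc l * f t (P t.castSucc l) (P t.succ (j t.succ)) := by
    simp_rw [mul_div_assoc]
    rw [Finset.prod_mul_distrib]
  rw [hfg, hb, h4, h5]
  have hNne : (N : ℝ) ≠ 0 := Nat.cast_ne_zero.mpr hN.ne'
  have hane := ha.ne'
  have hcne := hc.ne'
  have hZne := hZ.ne'
  have hw0ne := (hw 0 (j 0)).ne'
  have hslne := (hSig (Fin.last T)).ne'
  have hmne := (hm1 (P 0 (j 0))).ne'
  set av := ∏ t : Fin T,
      f t (P t.castSucc (j t.castSucc)) (P t.succ (j t.succ)) * g t.succ (P t.succ (j t.succ))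
  set cv := ∏ t : Fin T, Wbar P A t.castSucc (A t (j t.succ)) *
      mS t (P t.castSucc (A t (j t.succ))) (P t.succ (j t.succ))
  set dv := ∏ t : Fin T, ∑ i, W P A t.castSucc i
  set pfs := ∏ t : Fin T, f t (P t.castSucc (j t.castSucc)) (P t.succ (j t.succ)) /
      ∑ l, W P A t.castSucc l * f t (P t.castSucc l) (P t.succ (j t.succ))
  set pc2 := ∏ t : Fin T, W P A t.castSucc (j t.castSucc)
  set w0 := W P A 0 (j 0)
  set wl := W P A (Fin.last T) (j (Fin.last T))
  set sl := ∑ i, W P A (Fin.last T) i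
  set psi := ψ P A
  set mv := m1 (P 0 (j 0))
  field_simp
end

section
/- Under the augmented target distribution, the conditional distribution of the index sequence J_{1:T} given the basic random numbers and θ is π̃^N(j_{1:T} | v_{x,1:T}^{1:N}, v_{A,1:T-1}, θ) = w̄_T^{j_T} ∏_{t=2}^T [w_{t-1}^{j_{t-1}} f_t^θ(x_t^{j_t} | x_{t-1}^{j_{t-1}}) / Σ_{l=1}^N w_{t-1}^l f_t^θ(x_t^{j_t} | x_{t-1}^l)], and this conditional can be sampled by backward simulation: draw J_T with probability proportional to w_T^{j_T}, then for t = T−1,...,1 draw J_t = l with probability proportional to w_t^l f_t^θ(x_{t+1}^{j_{t+1}} | x_t^l). -/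
open Finset

private lemma alg_key (w0 m a1 a2 a3 a4 a5 a6 a7 a8 ps z np sl wl : ℝ)
    (hm : m ≠ 0) (ha3 : a3 ≠ 0) (ha4 : a4 ≠ 0) (ha5 : a5 ≠ 0) (ha7 : a7 ≠ 0)
    (ha8 : a8 ≠ 0) (hz : z ≠ 0) (hnp : np ≠ 0) (hsl : sl ≠ 0)
    (htel : w0 * a2 = a6 * wl) :
    w0 * m * ((a1 * (a2 * a3)) / a4) / z / np * (ps / (m * ((a5 * a3) / a8))) *
      ((a5 * a4) / a7)
    = ps * ((a8 * sl) / (z * np)) * (wl / sl * ((a6 * a1) / a7)) := by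
  have h1 : w0 * m * ((a1 * (a2 * a3)) / a4) / z / np * (ps / (m * ((a5 * a3) / a8))) *
      ((a5 * a4) / a7) = (w0 * a2) * (ps * a8 * a1 / (z * np * a7)) := by
    field_simp
  have h2 : ps * ((a8 * sl) / (z * np)) * (wl / sl * ((a6 * a1) / a7))
      = (a6 * wl) * (ps * a8 * a1 / (z * np * a7)) := by
    field_simp
  rw [h1, h2, htel]

private lemma backward_sum {N : ℕ} [Nonempty (Fin N)] :
    ∀ (n : ℕ) (w : Fin N → ℝ), (∑ k, w k = 1) →
      ∀ (q : Fin n → Fin N → Fin N → ℝ), (∀ t k, ∑ l, q t l k = 1) →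
      ∑ j : Fin (n + 1) → Fin N,
        w (j (Fin.last n)) * ∏ t, q t (j t.castSucc) (j t.succ) = 1 := by
  intro n
  induction n with
  | zero =>
    intro w hw q hq
    rw [← Equiv.sum_comp (Equiv.funUnique (Fin 1) (Fin N)).symm]
    simpa using hw
  | succ n ih =>
    intro w hw q hq
    rw [← Equiv.sum_comp (Fin.consEquiv (fun _ : Fin (n + 1 + 1) => Fin N)),
      Fintype.sum_prod_type]
    have step : ∀ (a : Fin N) (j' : Fin (n + 1) → Fin N),
        w ((Fin.consEquiv (fun _ : Fin (n + 1 + 1) => Fin N)) (a, j') (Fin.last (n + 1))) *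
          ∏ t : Fin (n + 1),
            q t ((Fin.consEquiv (fun _ : Fin (n + 1 + 1) => Fin N)) (a, j') t.castSucc)
              ((Fin.consEquiv (fun _ : Fin (n + 1 + 1) => Fin N)) (a, j') t.succ)
        = w (j' (Fin.last n)) *
            (q 0 a (j' 0) * ∏ t : Fin n, q t.succ (j' t.castSucc) (j' t.succ)) := by
      intro a j'
      have h1 : (Fin.consEquiv (fun _ : Fin (n + 1 + 1) => Fin N)) (a, j') = Fin.cons a j' := rfl
      rw [h1, Fin.prod_univ_succ, ← Fin.succ_last]
      simp only [← Fin.succ_castSucc, Fin.cons_succ, Fin.castSucc_zero, Fin.cons_zero]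
    calc ∑ a : Fin N, ∑ j' : Fin (n + 1) → Fin N,
          w ((Fin.consEquiv (fun _ : Fin (n + 1 + 1) => Fin N)) (a, j') (Fin.last (n + 1))) *
            ∏ t : Fin (n + 1),
              q t ((Fin.consEquiv (fun _ : Fin (n + 1 + 1) => Fin N)) (a, j') t.castSucc)
                ((Fin.consEquiv (fun _ : Fin (n + 1 + 1) => Fin N)) (a, j') t.succ)
        = ∑ j' : Fin (n + 1) → Fin N, ∑ a : Fin N,
            w (j' (Fin.last n)) *
              (q 0 a (j' 0) * ∏ t : Fin n, q t.succ (j' t.castSucc) (j' t.succ)) := by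
          rw [Finset.sum_comm]
          exact Finset.sum_congr rfl fun j' _ => Finset.sum_congr rfl fun a _ => step a j'
      _ = ∑ j' : Fin (n + 1) → Fin N,
            w (j' (Fin.last n)) * ∏ t : Fin n, q t.succ (j' t.castSucc) (j' t.succ) := by
          refine Finset.sum_congr rfl fun j' _ => ?_
          rw [← Finset.mul_sum, ← Finset.sum_mul, hq, one_mul]
      _ = 1 := ih w hw (fun t => q t.succ) (fun t k => hq t.succ k)


/-- Corollary 2: under the augmented target, the conditional distribution of the
index sequence `J_{1:T}` given the basic random numbers (and `θ`) is the
backward-simulation distribution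
`w̄_T^{j_T} ∏_{t≥2} w_{t-1}^{j_{t-1}} f_t(x_t^{j_t}|x_{t-1}^{j_{t-1}}) / ∑_l w_{t-1}^l f_t(x_t^{j_t}|x_{t-1}^l)`,
i.e. the joint target factors as (marginal over `j`) × (this product), which is
exactly the probability that sequential backward simulation draws `j_{1:T}`.
(Finite state space formalization, `T+1` time points, fixed `θ`.) -/
theorem stmt_9 {X : Type*} [Fintype X] [DecidableEq X] (N T : ℕ) (hN : 0 < N)
    (m1 f1 : X → ℝ) (g : Fin (T + 1) → X → ℝ)
    (mS f : Fin T → X → X → ℝ)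
    (hm1 : ∀ x, 0 < m1 x) (hf1 : ∀ x, 0 < f1 x) (hg : ∀ t x, 0 < g t x)
    (hmS : ∀ t x x', 0 < mS t x x') (hf : ∀ t x x', 0 < f t x x')
    -- importance weights of the particle system
    (W : (Fin (T + 1) → Fin N → X) → (Fin T → Fin N → Fin N) →
          Fin (T + 1) → Fin N → ℝ)
    (hW0 : ∀ P A i, W P A 0 i = f1 (P 0 i) * g 0 (P 0 i) / m1 (P 0 i))
    (hWt : ∀ P A (t : Fin T) i, W P A t.succ i =
        f t (P t.castSucc (A t i)) (P t.succ i) * g t.succ (P t.succ i)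
          / mS t (P t.castSucc (A t i)) (P t.succ i))
    -- normalized weights
    (Wbar : (Fin (T + 1) → Fin N → X) → (Fin T → Fin N → Fin N) →
          Fin (T + 1) → Fin N → ℝ)
    (hWbar : ∀ P A t i, Wbar P A t i = W P A t i / ∑ l, W P A t l)
    -- joint density of all basic random variables (particles and multinomial ancestors)
    (ψ : (Fin (T + 1) → Fin N → X) → (Fin T → Fin N → Fin N) → ℝ)
    (hψ : ∀ P A, ψ P A = (∏ i, m1 (P 0 i)) *
        ∏ t : Fin T, ∏ i, Wbar P A t.castSucc (A t i) *
          mS t (P t.castSucc (A t i)) (P t.succ i))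
    -- marginal likelihood and posterior density of a state trajectory
    (Zbar : ℝ)
    (hZbar : Zbar = ∑ ξ : Fin (T + 1) → X,
        f1 (ξ 0) * g 0 (ξ 0) *
          ∏ t : Fin T, f t (ξ t.castSucc) (ξ t.succ) * g t.succ (ξ t.succ))
    (post : (Fin (T + 1) → X) → ℝ)
    (hpost : ∀ ξ, post ξ = (f1 (ξ 0) * g 0 (ξ 0) *
        ∏ t : Fin T, f t (ξ t.castSucc) (ξ t.succ) * g t.succ (ξ t.succ)) / Zbar)
    -- the augmented target density π̃ᴺ
    (πN : (Fin (T + 1) → Fin N → X) → (Fin T → Fin N → Fin N) →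
          (Fin (T + 1) → Fin N) → ℝ)
    (hπN : ∀ P A j, πN P A j =
      post (fun t => P t (j t)) / (N : ℝ) ^ (T + 1) *
        (ψ P A / (m1 (P 0 (j 0)) *
          ∏ t : Fin T, Wbar P A t.castSucc (A t (j t.succ)) *
            mS t (P t.castSucc (A t (j t.succ))) (P t.succ (j t.succ)))) *
        ∏ t : Fin T,
          W P A t.castSucc (A t (j t.succ)) *
              f t (P t.castSucc (A t (j t.succ))) (P t.succ (j t.succ)) /
            ∑ l, W P A t.castSucc l * f t (P t.castSucc l) (P t.succ (j t.succ))) :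
    ∀ (P : Fin (T + 1) → Fin N → X) (A : Fin T → Fin N → Fin N)
      (j : Fin (T + 1) → Fin N),
      πN P A j =
        (∑ j' : Fin (T + 1) → Fin N, πN P A j') *
          (Wbar P A (Fin.last T) (j (Fin.last T)) *
            ∏ t : Fin T,
              W P A t.castSucc (j t.castSucc) *
                  f t (P t.castSucc (j t.castSucc)) (P t.succ (j t.succ)) /
                ∑ l, W P A t.castSucc l * f t (P t.castSucc l) (P t.succ (j t.succ))) := by
  intro P A j
  haveI : Nonempty (Fin N) := ⟨⟨0, hN⟩⟩
  haveI hXne : Nonempty X := ⟨P 0 ⟨0, hN⟩⟩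
  -- positivity of the weights
  have hWpos : ∀ (t : Fin (T + 1)) (i : Fin N), 0 < W P A t i := by
    intro t i
    induction t using Fin.cases with
    | zero => rw [hW0]; exact div_pos (mul_pos (hf1 _) (hg _ _)) (hm1 _)
    | succ t => rw [hWt]; exact div_pos (mul_pos (hf _ _ _) (hg _ _)) (hmS _ _ _)
  have hSpos : ∀ t : Fin (T + 1), 0 < ∑ l, W P A t l :=
    fun t => Finset.sum_pos (fun l _ => hWpos t l) Finset.univ_nonempty
  have hDpos : ∀ (t : Fin T) (k : Fin N),
      0 < ∑ l, W P A t.castSucc l * f t (P t.castSucc l) (P t.succ k) :=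
    fun t k => Finset.sum_pos
      (fun l _ => mul_pos (hWpos t.castSucc l) (hf _ _ _)) Finset.univ_nonempty
  have hZpos : 0 < Zbar := by
    rw [hZbar]
    exact Finset.sum_pos
      (fun ξ _ => mul_pos (mul_pos (hf1 _) (hg _ _))
        (Finset.prod_pos fun t _ => mul_pos (hf _ _ _) (hg _ _)))
      Finset.univ_nonempty
  have hnp : ((N : ℝ)) ^ (T + 1) ≠ 0 := by positivity
  -- the constant (marginal of πN over the index sequence)
  set c : ℝ := ψ P A *
      (((∏ t : Fin T, ∑ l, W P A t.castSucc l) * ∑ l, W P A (Fin.last T) l) /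
        (Zbar * (N : ℝ) ^ (T + 1))) with hc
  -- key factorization: πN P A j' = c * (backward-simulation probability of j')
  have key : ∀ j' : Fin (T + 1) → Fin N,
      πN P A j' = c *
        (Wbar P A (Fin.last T) (j' (Fin.last T)) *
          ∏ t : Fin T,
            W P A t.castSucc (j' t.castSucc) *
                f t (P t.castSucc (j' t.castSucc)) (P t.succ (j' t.succ)) /
              ∑ l, W P A t.castSucc l * f t (P t.castSucc l) (P t.succ (j' t.succ))) := by
    intro j'
    have hfg0 : f1 (P 0 (j' 0)) * g 0 (P 0 (j' 0)) =
        W P A 0 (j' 0) * m1 (P 0 (j' 0)) := by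
      rw [hW0, div_mul_cancel₀ _ (ne_of_gt (hm1 _))]
    have hX : ∏ t : Fin T,
          f t (P t.castSucc (j' t.castSucc)) (P t.succ (j' t.succ)) *
            g t.succ (P t.succ (j' t.succ)) =
        (∏ t : Fin T, f t (P t.castSucc (j' t.castSucc)) (P t.succ (j' t.succ))) *
          ((∏ t : Fin T, W P A t.succ (j' t.succ)) *
            ∏ t : Fin T, mS t (P t.castSucc (A t (j' t.succ))) (P t.succ (j' t.succ))) /
        ∏ t : Fin T, f t (P t.castSucc (A t (j' t.succ))) (P t.succ (j' t.succ)) := by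
      rw [← Finset.prod_mul_distrib, ← Finset.prod_mul_distrib, ← Finset.prod_div_distrib]
      refine Finset.prod_congr rfl fun t _ => ?_
      have hG : g t.succ (P t.succ (j' t.succ)) =
          W P A t.succ (j' t.succ) *
              mS t (P t.castSucc (A t (j' t.succ))) (P t.succ (j' t.succ)) /
            f t (P t.castSucc (A t (j' t.succ))) (P t.succ (j' t.succ)) := by
        rw [hWt P A t (j' t.succ), div_mul_cancel₀ _ (ne_of_gt (hmS t _ _)),
          mul_comm (f t (P t.castSucc (A t (j' t.succ))) (P t.succ (j' t.succ))),
          mul_div_cancel_right₀ _ (ne_of_gt (hf t _ _))]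
      rw [hG]
      ring
    have hY : ∏ t : Fin T,
          Wbar P A t.castSucc (A t (j' t.succ)) *
            mS t (P t.castSucc (A t (j' t.succ))) (P t.succ (j' t.succ)) =
        (∏ t : Fin T, W P A t.castSucc (A t (j' t.succ))) *
          (∏ t : Fin T, mS t (P t.castSucc (A t (j' t.succ))) (P t.succ (j' t.succ))) /
        ∏ t : Fin T, ∑ l, W P A t.castSucc l := by
      rw [← Finset.prod_mul_distrib, ← Finset.prod_div_distrib]
      refine Finset.prod_congr rfl fun t _ => ?_
      rw [hWbar, div_mul_eq_mul_div]
    have hZ2 : ∏ t : Fin T,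
          W P A t.castSucc (A t (j' t.succ)) *
              f t (P t.castSucc (A t (j' t.succ))) (P t.succ (j' t.succ)) /
            ∑ l, W P A t.castSucc l * f t (P t.castSucc l) (P t.succ (j' t.succ)) =
        (∏ t : Fin T, W P A t.castSucc (A t (j' t.succ))) *
          (∏ t : Fin T, f t (P t.castSucc (A t (j' t.succ))) (P t.succ (j' t.succ))) /
        ∏ t : Fin T, ∑ l, W P A t.castSucc l * f t (P t.castSucc l) (P t.succ (j' t.succ)) := by
      rw [← Finset.prod_mul_distrib, ← Finset.prod_div_distrib]
    have hB : ∏ t : Fin T,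
          W P A t.castSucc (j' t.castSucc) *
              f t (P t.castSucc (j' t.castSucc)) (P t.succ (j' t.succ)) /
            ∑ l, W P A t.castSucc l * f t (P t.castSucc l) (P t.succ (j' t.succ)) =
        (∏ t : Fin T, W P A t.castSucc (j' t.castSucc)) *
          (∏ t : Fin T, f t (P t.castSucc (j' t.castSucc)) (P t.succ (j' t.succ))) /
        ∏ t : Fin T, ∑ l, W P A t.castSucc l * f t (P t.castSucc l) (P t.succ (j' t.succ)) := by
      rw [← Finset.prod_mul_distrib, ← Finset.prod_div_distrib]
    have htel : W P A 0 (j' 0) * ∏ t : Fin T, W P A t.succ (j' t.succ) =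
        (∏ t : Fin T, W P A t.castSucc (j' t.castSucc)) *
          W P A (Fin.last T) (j' (Fin.last T)) := by
      rw [← Fin.prod_univ_succ (fun t => W P A t (j' t)),
        Fin.prod_univ_castSucc (fun t => W P A t (j' t))]
    rw [hπN, hpost, hfg0, hX, hY, hZ2, hB, hWbar, hc]
    exact alg_key _ _ _ _ _ _ _ _ _ _ _ _ _ _ _
      (ne_of_gt (hm1 _))
      (ne_of_gt (Finset.prod_pos fun t _ => hmS _ _ _))
      (ne_of_gt (Finset.prod_pos fun t _ => hf _ _ _))
      (ne_of_gt (Finset.prod_pos fun t _ => hWpos _ _))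
      (ne_of_gt (Finset.prod_pos fun t _ => hDpos t (j' t.succ)))
      (ne_of_gt (Finset.prod_pos fun t _ => hSpos _))
      (ne_of_gt hZpos) hnp (ne_of_gt (hSpos _)) htel
  -- the backward simulation probabilities sum to one
  have hBsum : ∑ j' : Fin (T + 1) → Fin N,
      Wbar P A (Fin.last T) (j' (Fin.last T)) *
        ∏ t : Fin T,
          W P A t.castSucc (j' t.castSucc) *
              f t (P t.castSucc (j' t.castSucc)) (P t.succ (j' t.succ)) /
            ∑ l, W P A t.castSucc l * f t (P t.castSucc l) (P t.succ (j' t.succ)) = 1 := by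
    refine backward_sum T (Wbar P A (Fin.last T)) ?_
      (fun t l k => W P A t.castSucc l * f t (P t.castSucc l) (P t.succ k) /
        ∑ l', W P A t.castSucc l' * f t (P t.castSucc l') (P t.succ k)) ?_
    · have : ∑ k, Wbar P A (Fin.last T) k =
          ∑ k, W P A (Fin.last T) k / ∑ l, W P A (Fin.last T) l :=
        Finset.sum_congr rfl fun k _ => by rw [hWbar]
      rw [this, ← Finset.sum_div, div_self (ne_of_gt (hSpos _))]
    · intro t k
      rw [← Finset.sum_div, div_self (ne_of_gt (hDpos t k))]
  have hsum : ∑ j' : Fin (T + 1) → Fin N, πN P A j' = c := by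
    calc ∑ j' : Fin (T + 1) → Fin N, πN P A j'
        = ∑ j' : Fin (T + 1) → Fin N, c *
            (Wbar P A (Fin.last T) (j' (Fin.last T)) *
              ∏ t : Fin T,
                W P A t.castSucc (j' t.castSucc) *
                    f t (P t.castSucc (j' t.castSucc)) (P t.succ (j' t.succ)) /
                  ∑ l, W P A t.castSucc l * f t (P t.castSucc l) (P t.succ (j' t.succ))) :=
          Finset.sum_congr rfl fun j' _ => key j'
      _ = c := by rw [← Finset.mul_sum, hBsum, mul_one]
  rw [key j, hsum]
end
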